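/- arXiv:2003.03447 — 2 statements merged into one kernel-verified Lean document; each statement's English description precedes it below -/
import Mathlib

section
/- Let G be a simple graph on n vertices and let G̅ be its complement. For every k with 1 ≤ k ≤ n−2, if BC_k(G) holds then BC_{n−k−1}(G̅) holds. -/
open Finset

namespace Brouwer

variable {V : Type*}

/-- The sum of the `k` largest values of `f` on a finite type, expressed as the
supremum over all `k`-element subsets of the sum of `f` over the subset. -/
noncomputable def sumKLargest [Fintype V] (f : V → ℝ) (k : ℕ) : ℝ :=
  sSup { x : ℝ | ∃ T : Finset V, T.card = k ∧ ∑ i ∈ T, f i = x }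

/-- The Laplacian matrix of a finite simple graph is Hermitian (real symmetric). -/
theorem lapMatrix_isHermitian [Fintype V] [DecidableEq V] (G : SimpleGraph V)
    [DecidableRel G.Adj] : (G.lapMatrix ℝ).IsHermitian := by
  rw [Matrix.IsHermitian, Matrix.conjTranspose_eq_transpose_of_trivial]
  exact G.isSymm_lapMatrix (R := ℝ)

/-- The adjacency matrix of a finite simple graph is Hermitian (real symmetric). -/
theorem adjMatrix_isHermitian [Fintype V] [DecidableEq V] (G : SimpleGraph V)
    [DecidableRel G.Adj] : (G.adjMatrix ℝ).IsHermitian := by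
  rw [Matrix.IsHermitian, Matrix.conjTranspose_eq_transpose_of_trivial]
  exact G.isSymm_adjMatrix

/-- The (multiset of) eigenvalues of the Laplacian matrix of `G`, indexed by vertices. -/
noncomputable def lapEig [Fintype V] [DecidableEq V] (G : SimpleGraph V) : V → ℝ := by
  classical exact (lapMatrix_isHermitian G).eigenvalues

/-- The (multiset of) eigenvalues of the adjacency matrix of `G`, indexed by vertices. -/
noncomputable def adjEig [Fintype V] [DecidableEq V] (G : SimpleGraph V) : V → ℝ := by
  classical exact (adjMatrix_isHermitian G).eigenvalues

/-- `sLap G k` is `s_k(G)`, the sum of the `k` largest Laplacian eigenvalues of `G`. -/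
noncomputable def sLap [Fintype V] [DecidableEq V] (G : SimpleGraph V) (k : ℕ) : ℝ :=
  sumKLargest (lapEig G) k

/-- The number of edges of `G`. -/
noncomputable def numEdges [Fintype V] (G : SimpleGraph V) : ℕ := by
  classical exact G.edgeFinset.card

/-- `BC G k`: Brouwer's conjectured inequality `s_k(G) ≤ m + (k+1 choose 2)`. -/
def BC [Fintype V] [DecidableEq V] (G : SimpleGraph V) (k : ℕ) : Prop :=
  sLap G k ≤ numEdges G + (k + 1).choose 2

/-- Number of edges of `G` with both endpoints in `S`. -/
noncomputable def edgesWithin [Fintype V] [DecidableEq V] (G : SimpleGraph V)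
    (S : Finset V) : ℕ := by
  classical exact (G.edgeFinset.filter (fun e => ∀ v ∈ e, v ∈ S)).card

/-- The adjacency spectral radius of `G`, i.e. the largest adjacency eigenvalue. -/
noncomputable def specRad [Fintype V] [DecidableEq V] (G : SimpleGraph V) : ℝ :=
  sumKLargest (adjEig G) 1

/-- The maximum subgraph spectral density `t(G)`:
the supremum of `ρ(G[S])/|S|` over nonempty vertex subsets `S`. -/
noncomputable def maxDensity [Fintype V] [DecidableEq V] (G : SimpleGraph V) : ℝ :=
  sSup { x : ℝ | ∃ S : Finset V, S.Nonempty ∧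
    x = specRad (G.induce (↑S : Set V)) / (S.card : ℝ) }

/-- Edge-edit distance between two graphs on the same vertex set. -/
noncomputable def editDistance [Fintype V] (G H : SimpleGraph V) : ℕ := by
  classical exact (symmDiff G.edgeFinset H.edgeFinset).card

/-- A split graph: the vertex set partitions into a clique and an independent set. -/
def IsSplit (G : SimpleGraph V) : Prop :=
  ∃ C : Set V, G.IsClique C ∧ Gᶜ.IsClique Cᶜ

/-- The splittance of `G`: the least number of edge edits needed to reach a split graph. -/
noncomputable def splittance [Fintype V] (G : SimpleGraph V) : ℕ :=
  sInf { d : ℕ | ∃ H : SimpleGraph V, IsSplit H ∧ editDistance G H = d }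

/-- The join `G + K₁` of `G` with one new vertex adjacent to every vertex of `G`. -/
def joinOne (G : SimpleGraph V) : SimpleGraph (Option V) where
  Adj x y := x ≠ y ∧ ∀ a, x = some a → ∀ b, y = some b → G.Adj a b
  symm := by
    constructor
    rintro x y ⟨hxy, h⟩
    exact ⟨hxy.symm, fun a ha b hb => (h b hb a ha).symm⟩
  loopless := by constructor; rintro x ⟨hxx, -⟩; exact hxx rfl

/-! ### Auxiliary lemmas -/

section Aux

open Matrix

set_option linter.unusedSectionVars false

lemma aux_setOf_finite [Fintype V] (f : V → ℝ) (k : ℕ) :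
    { x : ℝ | ∃ T : Finset V, T.card = k ∧ ∑ i ∈ T, f i = x }.Finite := by
  have : { x : ℝ | ∃ T : Finset V, T.card = k ∧ ∑ i ∈ T, f i = x }
      ⊆ Set.range (fun T : Finset V => ∑ i ∈ T, f i) := by
    rintro x ⟨T, -, rfl⟩; exact ⟨T, rfl⟩
  exact (Set.finite_range _).subset this

lemma aux_le_sumKLargest [Fintype V] (f : V → ℝ) {k : ℕ} {T : Finset V} (hT : T.card = k) :
    ∑ i ∈ T, f i ≤ sumKLargest f k :=
  le_csSup (aux_setOf_finite f k).bddAbove ⟨T, hT, rfl⟩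

lemma aux_sumKLargest_le [Fintype V] (f : V → ℝ) {k : ℕ} (hk : k ≤ Fintype.card V) {b : ℝ}
    (hb : ∀ T : Finset V, T.card = k → ∑ i ∈ T, f i ≤ b) : sumKLargest f k ≤ b := by
  apply csSup_le
  · obtain ⟨T, -, hT⟩ := Finset.exists_subset_card_eq (s := (univ : Finset V)) (n := k)
      (by simpa using hk)
    exact ⟨∑ i ∈ T, f i, T, hT, rfl⟩
  · rintro x ⟨T, hT, rfl⟩; exact hb T hT

lemma aux_exists_threshold [Fintype V] (f : V → ℝ) (r : ℕ) (hr1 : 1 ≤ r)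
    (hr : r ≤ Fintype.card V) :
    ∃ T : Finset V, T.card = r ∧ ∃ i₀ ∈ T,
      (∀ j ∈ T, f i₀ ≤ f j) ∧ (∀ j ∉ T, f j ≤ f i₀) := by
  classical
  have hne : ((univ : Finset V).powersetCard r).Nonempty := by
    apply Finset.powersetCard_nonempty.2; simpa using hr
  obtain ⟨T, hTmem, hTmax⟩ := Finset.exists_max_image _ (fun T => ∑ i ∈ T, f i) hne
  have hTcard : T.card = r := (Finset.mem_powersetCard.1 hTmem).2
  have hTne : T.Nonempty := Finset.card_pos.1 (by omega)
  obtain ⟨i₀, hi₀, hmin⟩ := Finset.exists_min_image T f hTne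
  refine ⟨T, hTcard, i₀, hi₀, hmin, ?_⟩
  intro j hj
  by_contra hlt
  push_neg at hlt
  set T' := insert j (T.erase i₀) with hT'
  have hjT' : j ∉ T.erase i₀ := fun h => hj (Finset.mem_of_mem_erase h)
  have hT'card : T'.card = r := by
    rw [hT', Finset.card_insert_of_notMem hjT', Finset.card_erase_of_mem hi₀]; omega
  have hT'mem : T' ∈ (univ : Finset V).powersetCard r :=
    Finset.mem_powersetCard.2 ⟨Finset.subset_univ _, hT'card⟩
  have hsum : ∑ i ∈ T', f i = ∑ i ∈ T, f i - f i₀ + f j := by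
    rw [hT', Finset.sum_insert hjT', ← Finset.sum_erase_add T f hi₀]; ring
  have := hTmax T' hT'mem
  rw [hsum] at this
  linarith

lemma aux_weighted_sum_le [Fintype V] [DecidableEq V] (f c : V → ℝ) (B e : ℝ) (r : ℕ)
    (hr1 : 1 ≤ r)
    (hr : r ≤ Fintype.card V) (hc0 : ∀ j, 0 ≤ c j) (hc1 : ∀ j, c j ≤ 1)
    (hf0 : ∀ j, 0 ≤ f j) (hfB : ∀ j, f j ≤ B) (he : 0 ≤ e)
    (hsum : ∑ j, c j ≤ r + e) :
    ∑ j, c j * f j ≤ sumKLargest f r + e * B := by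
  obtain ⟨T, hTcard, i₀, hi₀, hminT, hmaxO⟩ := aux_exists_threshold f r hr1 hr
  set t := f i₀ with ht
  have hsplit : ∑ j, c j * f j = ∑ j ∈ T, c j * f j + ∑ j ∈ univ \ T, c j * f j := by
    rw [← Finset.sum_sdiff (Finset.subset_univ T)]; ring
  have h1 : ∑ j ∈ T, c j * f j ≤ ∑ j ∈ T, f j - t * ∑ j ∈ T, (1 - c j) := by
    rw [Finset.mul_sum, ← Finset.sum_sub_distrib]
    apply Finset.sum_le_sum
    intro j hj
    have : t * (1 - c j) ≤ f j * (1 - c j) :=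
      mul_le_mul_of_nonneg_right (hminT j hj) (by linarith [hc1 j])
    nlinarith
  have h2 : ∑ j ∈ univ \ T, c j * f j ≤ t * ∑ j ∈ univ \ T, c j := by
    rw [Finset.mul_sum]
    apply Finset.sum_le_sum
    intro j hj
    have hjT : j ∉ T := (Finset.mem_sdiff.1 hj).2
    have := hmaxO j hjT
    nlinarith [hc0 j]
  have hcsplit : ∑ j ∈ univ \ T, c j = ∑ j, c j - ∑ j ∈ T, c j := by
    rw [← Finset.sum_sdiff (Finset.subset_univ T)]; ring
  have hTsum : ∑ j ∈ T, (1 - c j) = r - ∑ j ∈ T, c j := by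
    rw [Finset.sum_sub_distrib, Finset.sum_const, hTcard]; simp
  have hkey : ∑ j, c j * f j ≤ ∑ j ∈ T, f j + t * (∑ j, c j - r) := by
    rw [hsplit]
    have := add_le_add h1 h2
    rw [hcsplit, hTsum] at this
    nlinarith
  have ht0 : 0 ≤ t := hf0 i₀
  have htB : t ≤ B := hfB i₀
  have hlast : t * (∑ j, c j - r) ≤ e * B := by
    rcases le_or_gt (∑ j, c j) r with hle | hgt
    · have h3 : t * (∑ j, c j - r) ≤ 0 := mul_nonpos_of_nonneg_of_nonpos ht0 (by linarith)
      have h4 : 0 ≤ e * B := mul_nonneg he (le_trans ht0 htB)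
      linarith
    · have h3 : t * (∑ j, c j - r) ≤ B * (∑ j, c j - r) :=
        mul_le_mul_of_nonneg_right htB (by linarith)
      have h4 : B * (∑ j, c j - r) ≤ B * e := by
        apply mul_le_mul_of_nonneg_left (by linarith) (le_trans ht0 htB)
      linarith [h3, h4]
  calc ∑ j, c j * f j ≤ ∑ j ∈ T, f j + t * (∑ j, c j - r) := hkey
    _ ≤ sumKLargest f r + e * B := add_le_add (aux_le_sumKLargest f hTcard) hlast

lemma aux_lap_compl_eq [Fintype V] [DecidableEq V] (G : SimpleGraph V) [DecidableRel G.Adj]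
    [DecidableRel Gᶜ.Adj] :
    Gᶜ.lapMatrix ℝ = (Fintype.card V : ℝ) • (1 : Matrix V V ℝ)
      - Matrix.of (fun _ _ => (1:ℝ)) - G.lapMatrix ℝ := by
  ext i j
  simp only [SimpleGraph.lapMatrix, SimpleGraph.degMatrix, SimpleGraph.adjMatrix,
    Matrix.sub_apply, Matrix.smul_apply, Matrix.one_apply, Matrix.diagonal_apply,
    Matrix.of_apply, smul_eq_mul]
  by_cases hij : i = j
  · subst hij
    have h2 : G.degree i < Fintype.card V := G.degree_lt_card_verts i
    have h1 : (Gᶜ.degree i : ℝ) = (Fintype.card V : ℝ) - 1 - G.degree i := by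
      rw [G.degree_compl i, Nat.cast_sub (by omega), Nat.cast_sub (by omega)]
      push_cast; ring
    simp only [if_pos rfl, h1, if_neg (G.loopless.irrefl i), if_neg (Gᶜ.loopless.irrefl i), if_true]
    ring
  · simp only [if_neg hij]
    by_cases hadj : G.Adj i j
    · rw [if_neg (by simp [SimpleGraph.compl_adj, hadj]), if_pos hadj]; ring
    · rw [if_pos (by simp [SimpleGraph.compl_adj, hij, hadj]), if_neg hadj]; ring

lemma aux_trace_lap [Fintype V] [DecidableEq V] (G : SimpleGraph V) [DecidableRel G.Adj]
    [Fintype G.edgeSet] :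
    (G.lapMatrix ℝ).trace = 2 * G.edgeFinset.card := by
  have h : (G.lapMatrix ℝ).trace = ∑ i, (G.degree i : ℝ) := by
    simp [Matrix.trace, Matrix.diag, SimpleGraph.lapMatrix, SimpleGraph.degMatrix]
  rw [h, ← Nat.cast_sum, G.sum_degrees_eq_twice_card_edges]
  norm_cast
  congr!

lemma aux_card_edge_add_card_edge_compl [Fintype V] [DecidableEq V] (G : SimpleGraph V)
    [DecidableRel G.Adj] [DecidableRel Gᶜ.Adj] [Fintype G.edgeSet] [Fintype Gᶜ.edgeSet] :
    G.edgeFinset.card + Gᶜ.edgeFinset.card = (Fintype.card V).choose 2 := by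
  classical
  have hdisj : Disjoint G.edgeFinset Gᶜ.edgeFinset := by
    rw [Finset.disjoint_left]
    intro e he he'
    rw [SimpleGraph.mem_edgeFinset] at he he'
    induction e with
    | h x y => exact ((SimpleGraph.compl_adj G x y).1 he').2 he
  have hunion : G.edgeFinset ∪ Gᶜ.edgeFinset = (⊤ : SimpleGraph V).edgeFinset := by
    ext e
    simp only [Finset.mem_union, SimpleGraph.mem_edgeFinset]
    induction e with
    | h x y =>
      simp only [SimpleGraph.mem_edgeSet, SimpleGraph.compl_adj, SimpleGraph.top_adj]
      constructor
      · rintro (h | ⟨h, -⟩)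
        · exact h.ne
        · exact h
      · intro hne
        by_cases h : G.Adj x y
        · exact Or.inl h
        · exact Or.inr ⟨hne, h⟩
  rw [← Finset.card_union_of_disjoint hdisj, hunion,
    SimpleGraph.card_edgeFinset_top_eq_card_choose_two]

lemma aux_choose_succ_two_cast (a : ℕ) : (((a+1).choose 2 : ℕ) : ℝ) = a * (a+1) / 2 := by
  rw [Nat.choose_two_right]
  rw [Nat.cast_div (by simpa [Nat.succ_sub_one, Nat.mul_comm] using
    (Nat.even_mul_succ_self a).two_dvd) (by norm_num)]
  push_cast [Nat.succ_sub_one]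
  ring

lemma aux_trace_eq_sum_eig [Fintype V] [DecidableEq V] (A : Matrix V V ℝ)
    (hA : A.IsHermitian) : A.trace = ∑ p, hA.eigenvalues p := by
  conv_lhs => rw [hA.spectral_theorem]
  rw [Unitary.conjStarAlgAut_apply]
  rw [Matrix.trace_mul_cycle]
  rw [Unitary.coe_star_mul_self, Matrix.one_mul, Matrix.trace_diagonal]
  simp

lemma aux_quadform_eq [Fintype V] [DecidableEq V] (A : Matrix V V ℝ) (hA : A.IsHermitian)
    (x : V → ℝ) :
    x ⬝ᵥ (A *ᵥ x) = ∑ p, hA.eigenvalues p *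
      ((star (hA.eigenvectorUnitary : Matrix V V ℝ) *ᵥ x) p)^2 := by
  conv_lhs => rw [hA.spectral_theorem]
  rw [Unitary.conjStarAlgAut_apply]
  rw [← Matrix.mulVec_mulVec, ← Matrix.mulVec_mulVec, Matrix.dotProduct_mulVec]
  have h1 : vecMul x (hA.eigenvectorUnitary : Matrix V V ℝ)
      = star (hA.eigenvectorUnitary : Matrix V V ℝ) *ᵥ x := by
    rw [Matrix.star_eq_conjTranspose, Matrix.conjTranspose_eq_transpose_of_trivial,
      Matrix.mulVec_transpose]
  rw [h1]
  simp only [Matrix.mulVec_diagonal, dotProduct, Function.comp]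
  refine Finset.sum_congr rfl fun p _ => ?_
  simp only [RCLike.ofReal_real_eq_id, id_eq]
  ring

lemma aux_coord_eq_inner [Fintype V] [DecidableEq V] (A : Matrix V V ℝ) (hA : A.IsHermitian)
    (x : EuclideanSpace ℝ V) (p : V) :
    ((star (hA.eigenvectorUnitary : Matrix V V ℝ)) *ᵥ x) p
      = @inner ℝ (EuclideanSpace ℝ V) _ (hA.eigenvectorBasis p) x := by
  simp only [Matrix.mulVec, dotProduct, Matrix.star_apply, star_trivial,
    Matrix.IsHermitian.eigenvectorUnitary_apply]
  rw [PiLp.inner_apply]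
  simp [RCLike.inner_apply, conj_trivial]
  exact Finset.sum_congr rfl fun _ _ => mul_comm _ _

lemma aux_real_inner_eq_dot [Fintype V] (x y : EuclideanSpace ℝ V) :
    @inner ℝ (EuclideanSpace ℝ V) _ x y = ∑ j, x j * y j := by
  rw [PiLp.inner_apply]
  simp [RCLike.inner_apply, conj_trivial]
  exact Finset.sum_congr rfl fun _ _ => mul_comm _ _

lemma aux_col_sum_lap [Fintype V] [DecidableEq V] (G : SimpleGraph V) [DecidableRel G.Adj]
    (l : V) : ∑ j, G.lapMatrix ℝ j l = 0 := by
  have hsym : ∀ j, G.lapMatrix ℝ j l = G.lapMatrix ℝ l j := fun j => by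
    conv_lhs => rw [← (G.isSymm_lapMatrix (R := ℝ)).eq]
    rfl
  simp_rw [hsym]
  have := congrFun (G.lapMatrix_mulVec_const_eq_zero (R := ℝ)) l
  simpa [Matrix.mulVec, dotProduct] using this

lemma aux_sum_coords_eigvec_eq_zero [Fintype V] [DecidableEq V] (G : SimpleGraph V)
    [DecidableRel G.Adj]
    (hL : (G.lapMatrix ℝ).IsHermitian) (p : V) (hp : hL.eigenvalues p ≠ 0) :
    ∑ j, hL.eigenvectorBasis p j = 0 := by
  have hmul := hL.mulVec_eigenvectorBasis p
  have h2 := congrArg (fun v : V → ℝ => ∑ j, v j) hmul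
  simp only [Pi.smul_apply, smul_eq_mul] at h2
  have h3 : ∑ j, (G.lapMatrix ℝ *ᵥ ⇑(hL.eigenvectorBasis p)) j = 0 := by
    simp only [Matrix.mulVec, dotProduct]
    rw [Finset.sum_comm]
    simp_rw [← Finset.sum_mul, aux_col_sum_lap G]
    simp
  rw [h3, ← Finset.mul_sum] at h2
  rcases mul_eq_zero.1 h2.symm with h | h
  · exact absurd h hp
  · exact h

lemma aux_quadJ [Fintype V] (x : V → ℝ) :
    x ⬝ᵥ ((Matrix.of (fun _ _ => (1:ℝ))) *ᵥ x) = (∑ j, x j)^2 := by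
  simp only [Matrix.mulVec, dotProduct, Matrix.of_apply, one_mul]
  rw [← Finset.sum_mul, sq, mul_comm]

lemma aux_key_bound [Fintype V] [DecidableEq V] (G : SimpleGraph V) [DecidableRel G.Adj]
    [DecidableRel Gᶜ.Adj]
    (k : ℕ) (hk1 : 1 ≤ k) (hkn : k + 1 ≤ Fintype.card V)
    (w : V → EuclideanSpace ℝ V) (hw : Orthonormal ℝ w) (S : Finset V) (hS : S.card = k + 1) :
    ∑ i ∈ S, (w i ⬝ᵥ ((Matrix.of (fun _ _ => (1:ℝ)) + G.lapMatrix ℝ) *ᵥ w i))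
      ≤ Fintype.card V + sumKLargest (lapMatrix_isHermitian G).eigenvalues k := by
  set n : ℕ := Fintype.card V with hn
  have hn0 : (0:ℝ) < n := by
    have : 0 < n := by omega
    exact_mod_cast this
  set hL := lapMatrix_isHermitian G with hLdef
  set b := hL.eigenvectorBasis with hb
  set μ := hL.eigenvalues with hμ
  have hb_inner : ∀ p q, @inner ℝ (EuclideanSpace ℝ V) _ (b p) (b q)
      = if p = q then (1:ℝ) else 0 := fun p q =>
    orthonormal_iff_ite.1 b.orthonormal p q
  have hμ0 : ∀ p, 0 ≤ μ p := fun p =>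
    (SimpleGraph.posSemidef_lapMatrix ℝ G).eigenvalues_nonneg p
  have hquad : ∀ p, μ p = (b p : V → ℝ) ⬝ᵥ (G.lapMatrix ℝ *ᵥ (b p : V → ℝ)) := by
    intro p
    have := hL.eigenvalues_eq p
    simpa using this
  have hμn : ∀ p, μ p ≤ n := by
    intro p
    have hbb : (b p : V → ℝ) ⬝ᵥ (b p : V → ℝ) = 1 := by
      have h5 := hb_inner p p
      rw [if_pos rfl] at h5
      rw [← h5, aux_real_inner_eq_dot]
      rfl
    have hLc : (0:ℝ) ≤ (b p : V → ℝ) ⬝ᵥ (Gᶜ.lapMatrix ℝ *ᵥ (b p : V → ℝ)) := by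
      have := (SimpleGraph.posSemidef_lapMatrix ℝ Gᶜ).re_dotProduct_nonneg (b p : V → ℝ)
      simpa using this
    have hJ : (0:ℝ) ≤ (b p : V → ℝ) ⬝ᵥ ((Matrix.of (fun _ _ => (1:ℝ))) *ᵥ (b p : V → ℝ)) := by
      rw [aux_quadJ]; positivity
    have hdecomp := congrArg (fun M : Matrix V V ℝ =>
      (b p : V → ℝ) ⬝ᵥ (M *ᵥ (b p : V → ℝ))) (aux_lap_compl_eq G)
    simp only [Matrix.sub_mulVec, dotProduct_sub, Matrix.smul_mulVec,
      Matrix.one_mulVec, dotProduct_smul] at hdecomp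
    rw [hbb] at hdecomp
    rw [hquad p]
    have h6 := hLc
    rw [hdecomp] at h6
    simp only [smul_eq_mul, mul_one] at h6
    linarith
  set u : EuclideanSpace ℝ V := WithLp.toLp 2 (fun _ => (Real.sqrt n)⁻¹) with hu
  have hsqrt : Real.sqrt n * Real.sqrt n = n := Real.mul_self_sqrt (le_of_lt hn0)
  have hsqrt0 : (0:ℝ) < Real.sqrt n := Real.sqrt_pos.2 hn0
  have hu_inner : ∀ x : EuclideanSpace ℝ V, @inner ℝ (EuclideanSpace ℝ V) _ u x
      = (Real.sqrt n)⁻¹ * ∑ j, x j := by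
    intro x
    rw [aux_real_inner_eq_dot, Finset.mul_sum]
  have husum : ∑ j : V, u j = (n:ℝ) * (Real.sqrt n)⁻¹ := by
    simp only [hu, PiLp.toLp_apply]
    rw [Finset.sum_const, Finset.card_univ, ← hn, nsmul_eq_mul]
  have huu : @inner ℝ (EuclideanSpace ℝ V) _ u u = 1 := by
    rw [hu_inner, husum, ← mul_assoc, mul_comm ((Real.sqrt n)⁻¹) ((n:ℝ)), mul_assoc,
      ← mul_inv, hsqrt]
    exact mul_inv_cancel₀ (ne_of_gt hn0)
  set Q := {p : V // μ p ≠ 0} with hQ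
  set F : Option Q → EuclideanSpace ℝ V := fun o => o.elim u (fun p => b p.1) with hF
  have hub : ∀ q : Q, @inner ℝ (EuclideanSpace ℝ V) _ u (b q.1) = 0 := fun q => by
    rw [hu_inner, aux_sum_coords_eigvec_eq_zero G hL q.1 q.2, mul_zero]
  have hFon : Orthonormal ℝ F := by
    rw [orthonormal_iff_ite]
    rintro (_ | p) (_ | q)
    · show @inner ℝ (EuclideanSpace ℝ V) _ u u = _
      rw [huu, if_pos rfl]
    · show @inner ℝ (EuclideanSpace ℝ V) _ u (b q.1) = _
      rw [hub q, if_neg (by simp)]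
    · show @inner ℝ (EuclideanSpace ℝ V) _ (b p.1) u = _
      rw [real_inner_comm, hub p, if_neg (by simp)]
    · show @inner ℝ (EuclideanSpace ℝ V) _ (b p.1) (b q.1) = _
      rw [hb_inner p.1 q.1]
      by_cases h : p = q
      · rw [if_pos (by rw [h]), if_pos (by rw [h])]
      · rw [if_neg (fun hc => h (Subtype.ext hc)), if_neg (by simpa using h)]
  set d : V → ℝ := fun p => ∑ i ∈ S, (@inner ℝ (EuclideanSpace ℝ V) _ (b p) (w i))^2 with hd
  set c : V → ℝ := fun p => if μ p = 0 then 0 else d p with hc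
  set bb : ℝ := ∑ i ∈ S, (@inner ℝ (EuclideanSpace ℝ V) _ u (w i))^2 with hbb
  have hnormsq : ∀ x : EuclideanSpace ℝ V, ‖x‖^2 = @inner ℝ (EuclideanSpace ℝ V) _ x x :=
    fun x => (real_inner_self_eq_norm_sq x).symm
  have hd0 : ∀ p, 0 ≤ d p := fun p => Finset.sum_nonneg fun i _ => sq_nonneg _
  have hbessel : ∀ x : EuclideanSpace ℝ V, ‖x‖ = 1 →
      ∑ i ∈ S, (@inner ℝ (EuclideanSpace ℝ V) _ x (w i))^2 ≤ 1 := by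
    intro x hx
    have h7 := hw.sum_inner_products_le (s := S) x
    rw [hnormsq] at h7
    calc ∑ i ∈ S, (@inner ℝ (EuclideanSpace ℝ V) _ x (w i))^2
        = ∑ i ∈ S, ‖@inner ℝ (EuclideanSpace ℝ V) _ (w i) x‖^2 := by
          refine Finset.sum_congr rfl fun i _ => ?_
          rw [real_inner_comm, Real.norm_eq_abs, sq_abs]
      _ ≤ @inner ℝ (EuclideanSpace ℝ V) _ x x := h7
      _ = ‖x‖^2 := (hnormsq x).symm
      _ = 1 := by rw [hx]; norm_num
  have hbnorm : ∀ p, ‖b p‖ = 1 := fun p => b.orthonormal.1 p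
  have hunorm : ‖u‖ = 1 := by
    have h8 := hnormsq u
    rw [huu] at h8
    nlinarith [norm_nonneg u]
  have hd1 : ∀ p, d p ≤ 1 := fun p => hbessel (b p) (hbnorm p)
  have hbb1 : bb ≤ 1 := hbessel u hunorm
  have hbb0 : 0 ≤ bb := Finset.sum_nonneg fun i _ => sq_nonneg _
  have hc0 : ∀ p, 0 ≤ c p := by
    intro p; simp only [hc]; split
    · exact le_refl 0
    · exact hd0 p
  have hc1 : ∀ p, c p ≤ 1 := by
    intro p; simp only [hc]; split
    · norm_num
    · exact hd1 p
  have hcsum : ∑ p, c p ≤ (k:ℝ) + (1 - bb) := by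
    have h1 : ∑ p, c p = ∑ p ∈ Finset.univ.filter (fun p => ¬ μ p = 0), d p := by
      rw [Finset.sum_filter]
      refine Finset.sum_congr rfl fun p _ => ?_
      simp only [hc]
      by_cases h : μ p = 0 <;> simp [h]
    have h2 : ∑ p ∈ Finset.univ.filter (fun p => ¬ μ p = 0), d p = ∑ q : Q, d q.1 := by
      rw [← Finset.sum_subtype (Finset.univ.filter (fun p => ¬ μ p = 0))
        (fun x => by simp [hQ]) d]
    have h3 : bb + ∑ q : Q, d q.1 ≤ (k:ℝ) + 1 := by
      have hswap : bb + ∑ q : Q, d q.1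
          = ∑ i ∈ S, ((@inner ℝ (EuclideanSpace ℝ V) _ u (w i))^2
            + ∑ q : Q, (@inner ℝ (EuclideanSpace ℝ V) _ (b q.1) (w i))^2) := by
        rw [Finset.sum_add_distrib, hbb, hd]
        congr 1
        rw [Finset.sum_comm]
      rw [hswap]
      calc ∑ i ∈ S, ((@inner ℝ (EuclideanSpace ℝ V) _ u (w i))^2
            + ∑ q : Q, (@inner ℝ (EuclideanSpace ℝ V) _ (b q.1) (w i))^2)
          ≤ ∑ i ∈ S, (1:ℝ) := by
            refine Finset.sum_le_sum fun i _ => ?_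
            have h9 := hFon.sum_inner_products_le (s := (Finset.univ : Finset (Option Q))) (w i)
            rw [Fintype.sum_option] at h9
            simp only [hF, Option.elim] at h9
            have hwnorm : ‖w i‖^2 = 1 := by rw [hw.1 i]; norm_num
            calc (@inner ℝ (EuclideanSpace ℝ V) _ u (w i))^2
                  + ∑ q : Q, (@inner ℝ (EuclideanSpace ℝ V) _ (b q.1) (w i))^2
                = ‖@inner ℝ (EuclideanSpace ℝ V) _ u (w i)‖^2
                  + ∑ q : Q, ‖@inner ℝ (EuclideanSpace ℝ V) _ (b q.1) (w i)‖^2 := by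
                  simp [Real.norm_eq_abs, sq_abs]
              _ ≤ ‖w i‖^2 := h9
              _ = 1 := hwnorm
        _ = (k:ℝ) + 1 := by rw [Finset.sum_const, hS]; push_cast; ring
    rw [h1, h2]
    linarith
  have hsplit : ∑ i ∈ S, (w i ⬝ᵥ ((Matrix.of (fun _ _ => (1:ℝ)) + G.lapMatrix ℝ) *ᵥ w i))
      = ∑ i ∈ S, (w i ⬝ᵥ ((Matrix.of (fun _ _ => (1:ℝ))) *ᵥ w i))
        + ∑ i ∈ S, (w i ⬝ᵥ (G.lapMatrix ℝ *ᵥ w i)) := by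
    rw [← Finset.sum_add_distrib]
    refine Finset.sum_congr rfl fun i _ => ?_
    rw [Matrix.add_mulVec, dotProduct_add]
  have hterm1 : ∑ i ∈ S, (w i ⬝ᵥ ((Matrix.of (fun _ _ => (1:ℝ))) *ᵥ w i)) = n * bb := by
    rw [hbb, Finset.mul_sum]
    refine Finset.sum_congr rfl fun i _ => ?_
    rw [aux_quadJ, hu_inner, mul_pow, ← mul_assoc]
    have h2 : (n:ℝ) * ((Real.sqrt n)⁻¹)^2 = 1 := by
      rw [sq, ← mul_inv, hsqrt]
      exact mul_inv_cancel₀ (ne_of_gt hn0)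
    rw [h2, one_mul]
  have hterm2 : ∑ i ∈ S, (w i ⬝ᵥ (G.lapMatrix ℝ *ᵥ w i)) = ∑ p, c p * μ p := by
    have h1 : ∀ i, w i ⬝ᵥ (G.lapMatrix ℝ *ᵥ w i)
        = ∑ p, μ p * (@inner ℝ (EuclideanSpace ℝ V) _ (b p) (w i))^2 := by
      intro i
      rw [aux_quadform_eq (G.lapMatrix ℝ) hL]
      refine Finset.sum_congr rfl fun p _ => ?_
      rw [aux_coord_eq_inner]
    simp_rw [h1]
    rw [Finset.sum_comm]
    refine Finset.sum_congr rfl fun p _ => ?_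
    rw [← Finset.mul_sum]
    simp only [hc]
    by_cases h : μ p = 0
    · simp [h]
    · rw [if_neg h]
      simp only [hd]
      ring
  have hweighted : ∑ p, c p * μ p ≤ sumKLargest μ k + (1 - bb) * n :=
    aux_weighted_sum_le μ c n (1 - bb) k hk1 (by omega) hc0 hc1 hμ0 hμn (by linarith) hcsum
  rw [hsplit, hterm1, hterm2]
  have hfinal : (n:ℝ) * bb + (sumKLargest μ k + (1 - bb) * n) = n + sumKLargest μ k := by ring
  linarith [hweighted]

end Aux

open Matrix in
set_option maxHeartbeats 3200000 in
/-- if `BC_k(G)` holds, then `BC_{n-k-1}(Gᶜ)` holds, for `1 ≤ k ≤ n-2`. -/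
theorem bc_compl {V : Type*} [Fintype V] [DecidableEq V] (G : SimpleGraph V)
    (k : ℕ) (hk1 : 1 ≤ k) (hk2 : k ≤ Fintype.card V - 2) (h : BC G k) :
    BC Gᶜ (Fintype.card V - k - 1) := by
  classical
  have hn2 : k + 2 ≤ Fintype.card V := by omega
  obtain ⟨j, hj⟩ : ∃ j, Fintype.card V - k - 1 = j := ⟨_, rfl⟩
  have hcard : Fintype.card V = k + 1 + j := by omega
  have hj1 : 1 ≤ j := by omega
  set hLc := lapMatrix_isHermitian Gᶜ with hLcdef
  have hEig : lapEig Gᶜ = hLc.eigenvalues := by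
    unfold lapEig
    congr!
  unfold BC sLap at h ⊢
  rw [hj]
  apply aux_sumKLargest_le _ (by omega)
  intro T hT
  set S : Finset V := univ \ T with hSdef
  have hScard : S.card = k + 1 := by
    rw [hSdef, Finset.card_sdiff_of_subset (Finset.subset_univ T), Finset.card_univ, hT]; omega
  have hsum_split : ∑ i ∈ T, lapEig Gᶜ i = ∑ i, lapEig Gᶜ i - ∑ i ∈ S, lapEig Gᶜ i := by
    have h0 := Finset.sum_sdiff (f := lapEig Gᶜ) (Finset.subset_univ T)
    rw [← hSdef] at h0
    linarith [h0]
  have hnumE : (numEdges Gᶜ : ℝ) = (Gᶜ.edgeFinset.card : ℝ) := by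
    unfold numEdges
    congr!
  have htrace : ∑ i, lapEig Gᶜ i = 2 * (numEdges Gᶜ : ℝ) := by
    rw [hEig, ← aux_trace_eq_sum_eig _ hLc, aux_trace_lap Gᶜ, hnumE]
  -- lower bound for the complementary sum via the key spectral estimate
  have hlow : (k:ℝ) * (Fintype.card V) - sumKLargest (lapEig G) k ≤ ∑ i ∈ S, lapEig Gᶜ i := by
    set w : V → EuclideanSpace ℝ V := fun i => hLc.eigenvectorBasis i with hw
    have hworth : Orthonormal ℝ w := hLc.eigenvectorBasis.orthonormal
    have heach : ∀ i, lapEig Gᶜ i = (w i : V → ℝ) ⬝ᵥ (Gᶜ.lapMatrix ℝ *ᵥ (w i : V → ℝ)) := by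
      intro i
      rw [hEig]
      have := hLc.eigenvalues_eq i
      simpa using this
    have hnorm1 : ∀ i, (w i : V → ℝ) ⬝ᵥ (w i : V → ℝ) = 1 := by
      intro i
      have h5 := orthonormal_iff_ite.1 hworth i i
      rw [if_pos rfl] at h5
      rw [← h5, aux_real_inner_eq_dot]
      rfl
    have hdecomp : ∀ i, (w i : V → ℝ) ⬝ᵥ (Gᶜ.lapMatrix ℝ *ᵥ (w i : V → ℝ))
        = (Fintype.card V : ℝ)
          - (w i : V → ℝ) ⬝ᵥ ((Matrix.of (fun _ _ => (1:ℝ)) + G.lapMatrix ℝ)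
              *ᵥ (w i : V → ℝ)) := by
      intro i
      have h6 := congrArg (fun M : Matrix V V ℝ =>
        (w i : V → ℝ) ⬝ᵥ (M *ᵥ (w i : V → ℝ))) (aux_lap_compl_eq G)
      simp only [Matrix.sub_mulVec, Matrix.add_mulVec, dotProduct_sub,
        dotProduct_add, Matrix.smul_mulVec, Matrix.one_mulVec,
        dotProduct_smul, smul_eq_mul] at h6 ⊢
      rw [hnorm1 i, mul_one] at h6
      rw [h6]
      ring
    have hkey := aux_key_bound G k hk1 (by omega) w hworth S hScard
    have hsum1 : ∑ i ∈ S, lapEig Gᶜ i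
        = ((k:ℝ) + 1) * (Fintype.card V)
          - ∑ i ∈ S, ((w i : V → ℝ) ⬝ᵥ ((Matrix.of (fun _ _ => (1:ℝ)) + G.lapMatrix ℝ)
              *ᵥ (w i : V → ℝ))) := by
      have hstep : ∑ i ∈ S, lapEig Gᶜ i
          = ∑ i ∈ S, ((Fintype.card V : ℝ)
            - (w i : V → ℝ) ⬝ᵥ ((Matrix.of (fun _ _ => (1:ℝ)) + G.lapMatrix ℝ)
              *ᵥ (w i : V → ℝ))) := by
        refine Finset.sum_congr rfl fun i _ => ?_
        rw [heach i, hdecomp i]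
      rw [hstep, Finset.sum_sub_distrib, Finset.sum_const, hScard]
      push_cast
      ring
    have hsk : sumKLargest (lapEig G) k
        = sumKLargest (lapMatrix_isHermitian G).eigenvalues k := rfl
    rw [hsum1, hsk]
    have hcast : ((k:ℝ) + 1) * (Fintype.card V)
        - ((Fintype.card V : ℝ) + sumKLargest (lapMatrix_isHermitian G).eigenvalues k)
        = (k:ℝ) * (Fintype.card V) - sumKLargest (lapMatrix_isHermitian G).eigenvalues k := by
      ring
    linarith [hkey]
  -- edge counts
  have hmm : (numEdges G : ℝ) + (numEdges Gᶜ : ℝ) = (((Fintype.card V).choose 2 : ℕ) : ℝ) := by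
    have hnum : (numEdges G : ℝ) = (G.edgeFinset.card : ℝ) := by
      unfold numEdges
      congr!
    rw [hnum, hnumE, ← Nat.cast_add]
    norm_cast
    exact aux_card_edge_add_card_edge_compl G
  -- the binomial identity
  have hchoose : (((Fintype.card V).choose 2 : ℕ) : ℝ) + (((k+1).choose 2 : ℕ) : ℝ)
      = (k:ℝ) * (Fintype.card V) + (((j+1).choose 2 : ℕ) : ℝ) := by
    rw [hcard, (by omega : k + 1 + j = (k + j) + 1)]
    rw [aux_choose_succ_two_cast (k+j), aux_choose_succ_two_cast k, aux_choose_succ_two_cast j]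
    push_cast
    ring
  rw [hsum_split, htrace]
  linarith [h, hlow, hmm, hchoose]

end Brouwer
end

section
/- Let G be a simple graph on n vertices with m edges, and let S_k be a set of k vertices of G of largest degrees. Suppose BC_k(G) fails, i.e., s_k(G) > m + (k+1 choose 2). Then the number of non-adjacent (unordered) pairs of vertices inside S_k is at most k√(2n) − k, and the number of edges of G with both endpoints in V(G)∖S_k is at most k√(2n) − k. Consequently, there is a split graph with clique side S_k and independent side V(G)∖S_k differing from G in at most k√(8n) − 2k edges, so the splittance satisfies σ(G) < k√(8n). -/
open Finset

namespace Brouwer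

variable {V : Type*}

/-! ### Auxiliary lemmas for the proof of `almost_split_of_bc_fail` -/

set_option linter.unusedSectionVars false
set_option maxHeartbeats 1000000

section Spectral

open Matrix SimpleGraph
open scoped RealInnerProductSpace

variable [Fintype V] [DecidableEq V]

private lemma inner_sum_eq (y z : EuclideanSpace ℝ V) : ⟪y, z⟫ = ∑ v, y v * z v := by
  simp [PiLp.inner_apply, RCLike.inner_apply]
  exact Finset.sum_congr rfl fun v _ => mul_comm _ _

private lemma parseval (A : Matrix V V ℝ) (hA : A.IsHermitian) (x : EuclideanSpace ℝ V) :
    ∑ i, (∑ v, x v * hA.eigenvectorBasis i v)^2 = ∑ v, x v * x v := by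
  have h := hA.eigenvectorBasis.sum_inner_mul_inner x x
  rw [inner_sum_eq] at h
  rw [← h]
  refine Finset.sum_congr rfl fun i _ => ?_
  rw [inner_sum_eq, inner_sum_eq, sq]
  congr 1
  exact Finset.sum_congr rfl fun v _ => mul_comm _ _

private lemma basis_norm (A : Matrix V V ℝ) (hA : A.IsHermitian) (i : V) :
    ∑ v, hA.eigenvectorBasis i v * hA.eigenvectorBasis i v = 1 := by
  have := hA.eigenvectorBasis.orthonormal
  rw [orthonormal_iff_ite] at this
  have h := this i i
  rw [inner_sum_eq] at h
  simpa using h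

private lemma basis_row (A : Matrix V V ℝ) (hA : A.IsHermitian) (v : V) :
    ∑ i, hA.eigenvectorBasis i v * hA.eigenvectorBasis i v = 1 := by
  have h := parseval A hA (EuclideanSpace.single v 1)
  have h2 : ∀ i : V, ∑ u, (EuclideanSpace.single v (1:ℝ)) u * hA.eigenvectorBasis i u
      = hA.eigenvectorBasis i v := by
    intro i
    simp [EuclideanSpace.single_apply, ite_mul]
  simp only [h2] at h
  have h3 : ∑ u, (EuclideanSpace.single v (1:ℝ)) u * (EuclideanSpace.single v (1:ℝ)) u = 1 := by
    simp [EuclideanSpace.single_apply, ite_mul]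
  rw [h3] at h
  simpa [sq] using h

private lemma eig_eq_form (A : Matrix V V ℝ) (hA : A.IsHermitian) (i : V) :
    hA.eigenvalues i
      = ∑ v, hA.eigenvectorBasis i v * (A *ᵥ (fun u => hA.eigenvectorBasis i u)) v := by
  have h' : (A *ᵥ fun u => hA.eigenvectorBasis i u)
      = fun v => hA.eigenvalues i * hA.eigenvectorBasis i v := by
    have h := hA.mulVec_eigenvectorBasis i
    funext v
    have h2 := congrFun h v
    simpa using h2
  rw [h']
  rw [Finset.sum_congr rfl fun v (_ : v ∈ univ) => (by ring :
    hA.eigenvectorBasis i v * (hA.eigenvalues i * hA.eigenvectorBasis i v)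
      = hA.eigenvalues i * (hA.eigenvectorBasis i v * hA.eigenvectorBasis i v))]
  rw [← Finset.mul_sum, basis_norm, mul_one]

private lemma knapsack (S : Finset V) (f t : V → ℝ) (h0 : ∀ v, 0 ≤ t v) (h1 : ∀ v, t v ≤ 1)
    (hsum : ∑ v, t v = (S.card : ℝ)) (hS : ∀ v ∈ S, ∀ w ∉ S, f w ≤ f v) (hne : S.Nonempty) :
    ∑ v, f v * t v ≤ ∑ v ∈ S, f v := by
  obtain ⟨v0, hv0S, hv0⟩ := Finset.exists_min_image S f hne
  set δ := f v0 with hδ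
  have e1 : ∀ v ∈ S, f v * t v ≤ f v + δ * (t v - 1) := by
    intro v hv
    have hfv : δ ≤ f v := hv0 v hv
    have h := mul_le_mul_of_nonpos_right hfv (sub_nonpos.mpr (h1 v))
    nlinarith
  have e2 : ∀ v ∈ Sᶜ, f v * t v ≤ δ * t v := fun v hv =>
    mul_le_mul_of_nonneg_right (hS v0 hv0S v (by simpa using hv)) (h0 v)
  have m1 : ∑ v ∈ S, (f v + δ * (t v - 1)) = ∑ v ∈ S, f v + (δ * ∑ v ∈ S, t v - δ * S.card) := by
    rw [Finset.sum_add_distrib, ← Finset.mul_sum, Finset.sum_sub_distrib, Finset.sum_const,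
      nsmul_eq_mul, mul_one, mul_sub]
  have m2 : ∑ v ∈ Sᶜ, δ * t v = δ * ∑ v ∈ Sᶜ, t v := (Finset.mul_sum _ _ _).symm
  have m4 : δ * ∑ v ∈ S, t v + δ * ∑ v ∈ Sᶜ, t v = δ * S.card := by
    rw [← mul_add, Finset.sum_add_sum_compl, hsum]
  calc ∑ v, f v * t v = ∑ v ∈ S, f v * t v + ∑ v ∈ Sᶜ, f v * t v :=
        (Finset.sum_add_sum_compl S _).symm
    _ ≤ ∑ v ∈ S, (f v + δ * (t v - 1)) + ∑ v ∈ Sᶜ, δ * t v :=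
        add_le_add (Finset.sum_le_sum e1) (Finset.sum_le_sum e2)
    _ = ∑ v ∈ S, f v := by rw [m1, m2]; linarith

private lemma lap_eigenvalue_le_card (G : SimpleGraph V) [DecidableRel G.Adj] (i : V) :
    (lapMatrix_isHermitian G).eigenvalues i ≤ (Fintype.card V : ℝ) := by
  set hL := lapMatrix_isHermitian G
  set x : EuclideanSpace ℝ V := hL.eigenvectorBasis i with hxdef
  have hx2 : ∑ v, x v * x v = 1 := basis_norm _ hL i
  have heq : hL.eigenvalues i
      = ∑ v, x v * ((G.lapMatrix ℝ) *ᵥ (fun u => x u)) v := eig_eq_form _ hL i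
  have hform : ∑ v, x v * ((G.lapMatrix ℝ) *ᵥ (fun u => x u)) v
      = (∑ i : V, ∑ j : V, if G.Adj i j then (x i - x j)^2 else 0)/2 := by
    have := G.lapMatrix_toLinearMap₂' (R := ℝ) (fun u => x u)
    rw [Matrix.toLinearMap₂'_apply'] at this
    exact this
  rw [heq, hform]
  have step1 : ∑ i : V, ∑ j : V, (if G.Adj i j then (x i - x j)^2 else 0)
      ≤ ∑ i : V, ∑ j : V, (x i - x j)^2 := by
    refine Finset.sum_le_sum fun a _ => Finset.sum_le_sum fun b _ => ?_
    split
    · exact le_refl _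
    · positivity
  have hA1 : ∑ i : V, ∑ j : V, (x i * x i) = (Fintype.card V : ℝ) := by
    simp only [Finset.sum_const, card_univ, nsmul_eq_mul]
    rw [← Finset.mul_sum, hx2, mul_one]
  have hA2 : ∑ i : V, ∑ j : V, (x j * x j) = (Fintype.card V : ℝ) := by
    rw [Finset.sum_comm]; exact hA1
  have hA3 : ∑ i : V, ∑ j : V, (x i * x j) = (∑ v, x v)^2 := by
    rw [sq, Finset.sum_mul_sum]
  have houter : ∑ i : V, ∑ j : V, (x i - x j)^2
      = 2*(Fintype.card V : ℝ) - 2*(∑ v, x v)^2 := by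
    calc ∑ i : V, ∑ j : V, (x i - x j)^2
        = ∑ i : V, ∑ j : V, ((x i * x i) + (x j * x j) - 2*(x i * x j)) :=
          Finset.sum_congr rfl fun i _ => Finset.sum_congr rfl fun j _ => by ring
      _ = (∑ i : V, ∑ j : V, (x i * x i)) + (∑ i : V, ∑ j : V, (x j * x j))
            - 2*(∑ i : V, ∑ j : V, (x i * x j)) := by
          simp [Finset.sum_add_distrib, Finset.sum_sub_distrib, Finset.mul_sum]
      _ = 2*(Fintype.card V : ℝ) - 2*(∑ v, x v)^2 := by rw [hA1, hA2, hA3]; ring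
  have := sq_nonneg (∑ v, x v)
  linarith

private lemma sum_lap_eig_le (G : SimpleGraph V) [DecidableRel G.Adj] (S T : Finset V)
    (hST : T.card = S.card) (hne : S.Nonempty)
    (hdeg : ∀ v ∈ S, ∀ w ∉ S, G.degree w ≤ G.degree v) :
    ∑ i ∈ T, (lapMatrix_isHermitian G).eigenvalues i
      ≤ (∑ v ∈ S, (G.degree v : ℝ))
        + Real.sqrt ((T.card : ℝ) * (2 * G.edgeFinset.card)) := by
  set hL := lapMatrix_isHermitian G with hhL
  have hsplit : ∀ i, hL.eigenvalues i
      = (∑ v, (G.degree v : ℝ) * (hL.eigenvectorBasis i v * hL.eigenvectorBasis i v))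
        - ∑ v, hL.eigenvectorBasis i v
            * ((G.adjMatrix ℝ) *ᵥ (fun u => hL.eigenvectorBasis i u)) v := by
    intro i
    rw [eig_eq_form _ hL i]
    have hpt : ∀ v, hL.eigenvectorBasis i v
          * ((G.lapMatrix ℝ) *ᵥ (fun u => hL.eigenvectorBasis i u)) v
        = (G.degree v : ℝ) * (hL.eigenvectorBasis i v * hL.eigenvectorBasis i v)
          - hL.eigenvectorBasis i v
            * ((G.adjMatrix ℝ) *ᵥ (fun u => hL.eigenvectorBasis i u)) v := by
      intro v
      rw [lapMatrix_mulVec_apply, adjMatrix_mulVec_apply]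
      ring
    rw [Finset.sum_congr rfl fun v (_ : v ∈ univ) => hpt v, Finset.sum_sub_distrib]
  rw [Finset.sum_congr rfl fun i (_ : i ∈ T) => hsplit i, Finset.sum_sub_distrib]
  -- Term 1
  have hterm1 : ∑ i ∈ T, ∑ v, (G.degree v : ℝ)
        * (hL.eigenvectorBasis i v * hL.eigenvectorBasis i v)
      ≤ ∑ v ∈ S, (G.degree v : ℝ) := by
    rw [Finset.sum_comm]
    rw [Finset.sum_congr rfl fun v (_ : v ∈ univ) =>
      (Finset.mul_sum T (fun i => hL.eigenvectorBasis i v * hL.eigenvectorBasis i v)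
        ((G.degree v : ℝ))).symm]
    refine knapsack S _ (fun v => ∑ i ∈ T, hL.eigenvectorBasis i v * hL.eigenvectorBasis i v)
      (fun v => ?_) (fun v => ?_) ?_
      (fun v hv u hu => Nat.cast_le.mpr (hdeg v hv u hu)) hne
    · exact Finset.sum_nonneg fun i _ => mul_self_nonneg _
    · calc ∑ i ∈ T, hL.eigenvectorBasis i v * hL.eigenvectorBasis i v
          ≤ ∑ i, hL.eigenvectorBasis i v * hL.eigenvectorBasis i v :=
            Finset.sum_le_sum_of_subset_of_nonneg (Finset.subset_univ T)
              (fun i _ _ => mul_self_nonneg _)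
        _ = 1 := basis_row _ hL v
    · rw [Finset.sum_comm, ← hST]
      rw [Finset.sum_congr rfl fun i (_ : i ∈ T) => basis_norm _ hL i]
      simp
  -- Term 2
  have hterm2 : - ∑ i ∈ T, ∑ v, hL.eigenvectorBasis i v
        * ((G.adjMatrix ℝ) *ᵥ (fun u => hL.eigenvectorBasis i u)) v
      ≤ Real.sqrt ((T.card : ℝ) * (2 * G.edgeFinset.card)) := by
    set a : V → ℝ := fun i => ∑ v, hL.eigenvectorBasis i v
        * ((G.adjMatrix ℝ) *ᵥ (fun u => hL.eigenvectorBasis i u)) v with ha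
    have hbnd : ∀ i, (a i)^2
        ≤ ∑ v, (((G.adjMatrix ℝ) *ᵥ (fun u => hL.eigenvectorBasis i u)) v)^2 := by
      intro i
      have hcs := Finset.sum_mul_sq_le_sq_mul_sq univ (fun v => hL.eigenvectorBasis i v)
        (fun v => ((G.adjMatrix ℝ) *ᵥ (fun u => hL.eigenvectorBasis i u)) v)
      have hb : ∑ v, (hL.eigenvectorBasis i v)^2 = 1 := by
        rw [Finset.sum_congr rfl fun v (_ : v ∈ univ) => sq (hL.eigenvectorBasis i v)]
        exact basis_norm _ hL i
      calc (a i)^2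
          ≤ (∑ v, (hL.eigenvectorBasis i v)^2)
            * ∑ v, (((G.adjMatrix ℝ) *ᵥ (fun u => hL.eigenvectorBasis i u)) v)^2 := hcs
        _ = ∑ v, (((G.adjMatrix ℝ) *ᵥ (fun u => hL.eigenvectorBasis i u)) v)^2 := by
            rw [hb, one_mul]
    have htot : ∑ i, ∑ v, (((G.adjMatrix ℝ) *ᵥ (fun u => hL.eigenvectorBasis i u)) v)^2
        = 2 * (G.edgeFinset.card : ℝ) := by
      rw [Finset.sum_comm]
      have hrowv : ∀ v, ∑ i, (((G.adjMatrix ℝ) *ᵥ (fun u => hL.eigenvectorBasis i u)) v)^2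
          = (G.degree v : ℝ) := by
        intro v
        have hmv : ∀ i, ((G.adjMatrix ℝ) *ᵥ (fun u => hL.eigenvectorBasis i u)) v
            = ∑ u, (WithLp.toLp 2 (fun u => G.adjMatrix ℝ v u) : EuclideanSpace ℝ V) u
                * hL.eigenvectorBasis i u := by
          intro i
          simp [Matrix.mulVec, dotProduct]
        rw [Finset.sum_congr rfl fun i (_ : i ∈ univ) => by rw [hmv i]]
        rw [parseval _ hL (WithLp.toLp 2 (fun u => G.adjMatrix ℝ v u) : EuclideanSpace ℝ V)]
        simp only [PiLp.toLp_apply]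
        have hsq : ∀ u, (G.adjMatrix ℝ) v u * (G.adjMatrix ℝ) v u
            = if G.Adj v u then 1 else 0 := by
          intro u
          by_cases h : G.Adj v u <;> simp [h]
        rw [Finset.sum_congr rfl fun u (_ : u ∈ univ) => hsq u]
        exact (G.degree_eq_sum_if_adj v).symm
      rw [Finset.sum_congr rfl fun v (_ : v ∈ univ) => hrowv v]
      have h := G.sum_degrees_eq_twice_card_edges
      have hcast := congrArg (fun n : ℕ => (n : ℝ)) h
      push_cast at hcast
      exact hcast
    have hsum_sq : ∑ i ∈ T, (a i)^2 ≤ 2 * (G.edgeFinset.card : ℝ) := by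
      calc ∑ i ∈ T, (a i)^2
          ≤ ∑ i ∈ T, ∑ v, (((G.adjMatrix ℝ) *ᵥ (fun u => hL.eigenvectorBasis i u)) v)^2 :=
            Finset.sum_le_sum fun i _ => hbnd i
        _ ≤ ∑ i, ∑ v, (((G.adjMatrix ℝ) *ᵥ (fun u => hL.eigenvectorBasis i u)) v)^2 :=
            Finset.sum_le_sum_of_subset_of_nonneg (Finset.subset_univ T)
              (fun i _ _ => Finset.sum_nonneg fun v _ => sq_nonneg _)
        _ = 2 * (G.edgeFinset.card : ℝ) := htot
    have hcs2 : (∑ i ∈ T, (- a i))^2 ≤ (T.card : ℝ) * (2 * G.edgeFinset.card) := by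
      calc (∑ i ∈ T, (- a i))^2 ≤ (T.card : ℝ) * ∑ i ∈ T, (- a i)^2 :=
            sq_sum_le_card_mul_sum_sq
        _ ≤ (T.card : ℝ) * (2 * G.edgeFinset.card) := by
            refine mul_le_mul_of_nonneg_left ?_ (by positivity)
            simpa [neg_sq] using hsum_sq
    calc - ∑ i ∈ T, a i = ∑ i ∈ T, (- a i) := by rw [← Finset.sum_neg_distrib]
      _ ≤ |∑ i ∈ T, (- a i)| := le_abs_self _
      _ = Real.sqrt ((∑ i ∈ T, (- a i))^2) := (Real.sqrt_sq_eq_abs _).symm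
      _ ≤ Real.sqrt ((T.card : ℝ) * (2 * G.edgeFinset.card)) := Real.sqrt_le_sqrt hcs2
  linarith

end Spectral

section Counting

open Matrix SimpleGraph

variable [Fintype V] [DecidableEq V]

private lemma card_eq_of_mem_iff {α : Type*} {s t : Finset α} (h : ∀ a, a ∈ s ↔ a ∈ t) :
    s.card = t.card := congrArg Finset.card (Finset.ext h)

private lemma lapEig_eq (G : SimpleGraph V) [DecidableRel G.Adj] :
    lapEig G = (lapMatrix_isHermitian G).eigenvalues := by
  unfold lapEig
  congr!

private lemma numEdges_eq (G : SimpleGraph V) [Fintype G.edgeSet] :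
    numEdges G = G.edgeFinset.card := by
  unfold numEdges
  exact card_eq_of_mem_iff fun e => by simp [mem_edgeFinset]

private lemma edgesWithin_eq (G : SimpleGraph V) [Fintype G.edgeSet] (S : Finset V)
    [DecidablePred fun e : Sym2 V => ∀ v ∈ e, v ∈ S] :
    edgesWithin G S = (G.edgeFinset.filter (fun e => ∀ v ∈ e, v ∈ S)).card := by
  unfold edgesWithin
  exact card_eq_of_mem_iff fun e => by simp [mem_edgeFinset]

private lemma editDistance_eq (G H : SimpleGraph V) [Fintype G.edgeSet] [Fintype H.edgeSet] :
    editDistance G H = (symmDiff G.edgeFinset H.edgeFinset).card := by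
  unfold editDistance
  exact card_eq_of_mem_iff fun e => by
    simp [Finset.mem_symmDiff, mem_edgeFinset]

private def restrict (H : SimpleGraph V) (P : V → Prop) : SimpleGraph V where
  Adj u v := H.Adj u v ∧ P u ∧ P v
  symm := ⟨fun u v h => ⟨h.1.symm, h.2.2, h.2.1⟩⟩
  loopless := ⟨fun u h => H.loopless.irrefl u h.1⟩

private lemma two_mul_edgesWithin (H : SimpleGraph V) [DecidableRel H.Adj] (S : Finset V) :
    2 * edgesWithin H S
      = ∑ u : V, ∑ v : V, (if H.Adj u v ∧ u ∈ S ∧ v ∈ S then 1 else 0) := by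
  haveI hdec : DecidableRel (restrict H (· ∈ S)).Adj := fun u v =>
    inferInstanceAs (Decidable (H.Adj u v ∧ u ∈ S ∧ v ∈ S))
  have h1 : edgesWithin H S = (restrict H (· ∈ S)).edgeFinset.card := by
    unfold edgesWithin
    apply card_eq_of_mem_iff
    intro e
    induction e with
    | _ a b =>
      simp only [Finset.mem_filter, mem_edgeFinset, mem_edgeSet, Sym2.mem_iff]
      show (H.Adj a b ∧ ∀ v, v = a ∨ v = b → v ∈ S) ↔ (H.Adj a b ∧ a ∈ S ∧ b ∈ S)
      constructor
      · rintro ⟨hadj, hall⟩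
        exact ⟨hadj, hall a (Or.inl rfl), hall b (Or.inr rfl)⟩
      · rintro ⟨hadj, ha, hb⟩
        refine ⟨hadj, ?_⟩
        rintro v (rfl | rfl) <;> assumption
  rw [h1, ← (restrict H (· ∈ S)).sum_degrees_eq_twice_card_edges]
  refine Finset.sum_congr rfl fun u _ => ?_
  have := (restrict H (· ∈ S)).degree_eq_sum_if_adj (R := ℕ) u
  rw [Nat.cast_id] at this
  rw [this]
  exact Finset.sum_congr rfl fun v _ => if_congr Iff.rfl rfl rfl

private lemma two_mul_numEdges (G : SimpleGraph V) [DecidableRel G.Adj] :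
    2 * numEdges G = ∑ u : V, ∑ v : V, (if G.Adj u v then 1 else 0) := by
  rw [numEdges_eq, ← G.sum_degrees_eq_twice_card_edges]
  refine Finset.sum_congr rfl fun u _ => ?_
  have := G.degree_eq_sum_if_adj (R := ℕ) u
  rwa [Nat.cast_id] at this

private lemma deg_sum_S (G : SimpleGraph V) [DecidableRel G.Adj] (S : Finset V) :
    ∑ v ∈ S, G.degree v
      = ∑ u : V, ∑ v : V, (if G.Adj u v ∧ u ∈ S then 1 else 0) := by
  have h0 : ∑ u : V, (if u ∈ S then G.degree u else 0) = ∑ v ∈ S, G.degree v := by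
    rw [Finset.sum_ite_mem, Finset.univ_inter]
  rw [← h0]
  refine Finset.sum_congr rfl fun u _ => ?_
  by_cases hu : u ∈ S
  · simp only [hu, if_true, and_true]
    have := G.degree_eq_sum_if_adj (R := ℕ) u
    rwa [Nat.cast_id] at this
  · simp [hu]

private lemma sum_indicator_S (S : Finset V) :
    ∑ v : V, (if v ∈ S then 1 else 0) = S.card := by
  rw [Finset.sum_ite_mem, Finset.univ_inter, Finset.sum_const, smul_eq_mul, mul_one]

private lemma count_identity (G : SimpleGraph V) [DecidableRel G.Adj] (S : Finset V) :
    2 * (∑ v ∈ S, G.degree v) + 2 * edgesWithin Gᶜ S + 2 * edgesWithin G Sᶜ + S.card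
      = 2 * numEdges G + S.card * S.card := by
  have hXY : (∑ u : V, ∑ v : V, if G.Adj u v ∧ u ∈ S then 1 else 0)
      = ∑ u : V, ∑ v : V, (if G.Adj u v ∧ v ∈ S then 1 else 0) := by
    rw [Finset.sum_comm]
    exact Finset.sum_congr rfl fun u _ => Finset.sum_congr rfl fun v _ =>
      if_congr (and_congr_left' (G.adj_comm v u)) rfl rfl
  have hD : 2 * (∑ v ∈ S, G.degree v)
      = (∑ u : V, ∑ v : V, (if G.Adj u v ∧ u ∈ S then 1 else 0))
        + (∑ u : V, ∑ v : V, (if G.Adj u v ∧ v ∈ S then 1 else 0)) := by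
    rw [two_mul]
    congr 1
    · exact deg_sum_S G S
    · rw [deg_sum_S G S]; exact hXY
  have hK : (∑ u : V, ∑ v : V, (if u = v ∧ u ∈ S then 1 else 0)) = S.card := by
    have h1 : ∀ u : V, (∑ v : V, (if u = v ∧ u ∈ S then 1 else 0))
        = if u ∈ S then 1 else 0 := by
      intro u
      by_cases hu : u ∈ S
      · simp [hu, Finset.sum_ite_eq]
      · simp [hu]
    rw [Finset.sum_congr rfl fun u _ => h1 u, sum_indicator_S]
  have hKK : (∑ u : V, ∑ v : V, (if u ∈ S ∧ v ∈ S then 1 else 0)) = S.card * S.card := by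
    have h1 : ∀ u : V, (∑ v : V, (if u ∈ S ∧ v ∈ S then 1 else 0))
        = if u ∈ S then S.card else 0 := by
      intro u
      by_cases hu : u ∈ S
      · simpa [hu] using sum_indicator_S S
      · simp [hu]
    rw [Finset.sum_congr rfl fun u _ => h1 u, Finset.sum_ite_mem, Finset.univ_inter,
      Finset.sum_const, smul_eq_mul]
  have cell : ∀ u v : V,
      ((if G.Adj u v ∧ u ∈ S then 1 else 0) + (if G.Adj u v ∧ v ∈ S then 1 else 0))
        + (if Gᶜ.Adj u v ∧ u ∈ S ∧ v ∈ S then 1 else 0)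
        + (if G.Adj u v ∧ u ∈ Sᶜ ∧ v ∈ Sᶜ then 1 else 0)
        + (if u = v ∧ u ∈ S then 1 else 0)
      = (if G.Adj u v then 1 else 0) + (if u ∈ S ∧ v ∈ S then 1 else 0) := by
    intro u v
    by_cases h3 : G.Adj u v
    · have hne : u ≠ v := G.ne_of_adj h3
      by_cases h1 : u ∈ S <;> by_cases h2 : v ∈ S <;>
        simp [h1, h2, h3, hne, compl_adj, Finset.mem_compl]
    · by_cases he : u = v
      · subst he
        by_cases h1 : u ∈ S <;> simp [h1, h3, compl_adj, Finset.mem_compl]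
      · by_cases h1 : u ∈ S <;> by_cases h2 : v ∈ S <;>
          simp [h1, h2, h3, he, compl_adj, Finset.mem_compl]
  rw [hD, two_mul_edgesWithin Gᶜ S, two_mul_edgesWithin G Sᶜ, two_mul_numEdges, ← hKK, ← hK]
  simp only [← Finset.sum_add_distrib]
  exact Finset.sum_congr rfl fun u _ => Finset.sum_congr rfl fun v _ => cell u v

end Counting

section Split

open Matrix SimpleGraph

variable [Fintype V] [DecidableEq V]

private def splitG (G : SimpleGraph V) (S : Finset V) : SimpleGraph V where
  Adj u v := u ≠ v ∧ ((u ∈ S ∧ v ∈ S) ∨ (G.Adj u v ∧ (u ∈ S ∨ v ∈ S)))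
  symm := by
    constructor
    rintro u v ⟨hne, h⟩
    refine ⟨hne.symm, ?_⟩
    rcases h with ⟨ha, hb⟩ | ⟨ha, hb⟩
    · exact Or.inl ⟨hb, ha⟩
    · exact Or.inr ⟨ha.symm, hb.symm⟩
  loopless := ⟨fun u h => h.1 rfl⟩

private lemma splitG_clique (G : SimpleGraph V) (S : Finset V) :
    (splitG G S).IsClique (↑S : Set V) := by
  intro u hu v hv hne
  exact ⟨hne, Or.inl ⟨hu, hv⟩⟩

private lemma splitG_indep (G : SimpleGraph V) (S : Finset V) :
    (splitG G S)ᶜ.IsClique ((↑S : Set V)ᶜ) := by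
  intro u hu v hv hne
  have hu' : u ∉ S := by simpa using hu
  have hv' : v ∉ S := by simpa using hv
  rw [SimpleGraph.compl_adj]
  refine ⟨hne, ?_⟩
  intro hadj
  have h2 : u ≠ v ∧ ((u ∈ S ∧ v ∈ S) ∨ (G.Adj u v ∧ (u ∈ S ∨ v ∈ S))) := hadj
  rcases h2.2 with ⟨ha, _⟩ | ⟨_, ha | hb⟩
  · exact hu' ha
  · exact hu' ha
  · exact hv' hb

private lemma editDistance_splitG_le (G : SimpleGraph V) [DecidableRel G.Adj] (S : Finset V) :
    editDistance G (splitG G S) ≤ edgesWithin G Sᶜ + edgesWithin Gᶜ S := by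
  classical
  rw [editDistance_eq, edgesWithin_eq, edgesWithin_eq]
  refine le_trans (le_trans (Finset.card_le_card ?_) (Finset.card_union_le _ _)) le_rfl
  intro e he
  rw [Finset.mem_symmDiff] at he
  rw [Finset.mem_union, Finset.mem_filter, Finset.mem_filter]
  induction e with
  | _ a b =>
    simp only [mem_edgeFinset, mem_edgeSet] at he ⊢
    rcases he with ⟨hG, hH⟩ | ⟨hH, hG⟩
    · left
      have hne : a ≠ b := G.ne_of_adj hG
      have hout : a ∉ S ∧ b ∉ S := by
        by_cases ha : a ∈ S
        · exact absurd (⟨hne, Or.inr ⟨hG, Or.inl ha⟩⟩ :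
            a ≠ b ∧ ((a ∈ S ∧ b ∈ S) ∨ (G.Adj a b ∧ (a ∈ S ∨ b ∈ S)))) hH
        · by_cases hb : b ∈ S
          · exact absurd (⟨hne, Or.inr ⟨hG, Or.inr hb⟩⟩ :
              a ≠ b ∧ ((a ∈ S ∧ b ∈ S) ∨ (G.Adj a b ∧ (a ∈ S ∨ b ∈ S)))) hH
          · exact ⟨ha, hb⟩
      refine ⟨hG, ?_⟩
      intro v hv
      rw [Sym2.mem_iff] at hv
      rcases hv with rfl | rfl
      · exact Finset.mem_compl.mpr hout.1
      · exact Finset.mem_compl.mpr hout.2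
    · right
      have h2 : a ≠ b ∧ ((a ∈ S ∧ b ∈ S) ∨ (G.Adj a b ∧ (a ∈ S ∨ b ∈ S))) := hH
      rcases h2.2 with ⟨ha, hb⟩ | ⟨hadj, -⟩
      · refine ⟨(G.compl_adj a b).mpr ⟨h2.1, hG⟩, ?_⟩
        intro v hv
        rw [Sym2.mem_iff] at hv
        rcases hv with rfl | rfl
        · exact ha
        · exact hb
      · exact absurd hadj hG

private lemma splittance_le_editDistance (G H : SimpleGraph V) (hs : IsSplit H) :
    splittance G ≤ editDistance G H :=
  Nat.sInf_le ⟨H, hs, rfl⟩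

end Split

/-- if `BC_k(G)` fails and `S_k` is a set of `k` vertices of largest degrees,
then the non-edges inside `S_k` and the edges outside `S_k` each number at most
`k√(2n) - k`; consequently some split graph with clique side `S_k` and independent side
`V∖S_k` differs from `G` in at most `k√(8n) - 2k` edges, and `σ(G) < k√(8n)`. -/
theorem almost_split_of_bc_fail {V : Type*} [Fintype V] [DecidableEq V] (G : SimpleGraph V)
    [DecidableRel G.Adj] (k : ℕ) (hk1 : 1 ≤ k) (hk2 : k ≤ Fintype.card V)
    (S : Finset V) (hcard : S.card = k)
    (hdeg : ∀ v ∈ S, ∀ w ∉ S, G.degree w ≤ G.degree v)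
    (hfail : ¬ BC G k) (n : ℝ) (hn : n = (Fintype.card V : ℝ)) :
    (edgesWithin Gᶜ S : ℝ) ≤ (k : ℝ) * Real.sqrt (2 * n) - (k : ℝ) ∧
    (edgesWithin G Sᶜ : ℝ) ≤ (k : ℝ) * Real.sqrt (2 * n) - (k : ℝ) ∧
    (∃ H : SimpleGraph V, H.IsClique (↑S : Set V) ∧ Hᶜ.IsClique ((↑S : Set V)ᶜ) ∧
      (editDistance G H : ℝ) ≤ (k : ℝ) * Real.sqrt (8 * n) - 2 * (k : ℝ)) ∧
    (splittance G : ℝ) < (k : ℝ) * Real.sqrt (8 * n) := by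
  classical
  subst hn
  have hLrw : lapEig G = (lapMatrix_isHermitian G).eigenvalues := lapEig_eq G
  have hSne : S.Nonempty := Finset.card_pos.mp (by rw [hcard]; exact hk1)
  have hk0 : (0:ℝ) ≤ (k:ℝ) := Nat.cast_nonneg k
  have hk1R : (1:ℝ) ≤ (k:ℝ) := by exact_mod_cast hk1
  have hset_ne : {x : ℝ | ∃ T : Finset V, T.card = k ∧ ∑ i ∈ T, lapEig G i = x}.Nonempty := by
    obtain ⟨T, -, hTcard⟩ := Finset.exists_subset_card_eq (s := (univ : Finset V)) (n := k)
      (by rw [Finset.card_univ]; exact hk2)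
    exact ⟨∑ i ∈ T, lapEig G i, T, hTcard, rfl⟩
  -- first upper bound : s_k ≤ k n
  have hb1 : sLap G k ≤ (k:ℝ) * (Fintype.card V : ℝ) := by
    unfold sLap sumKLargest
    refine csSup_le hset_ne ?_
    rintro x ⟨T, hT, rfl⟩
    rw [hLrw]
    calc ∑ i ∈ T, (lapMatrix_isHermitian G).eigenvalues i
        ≤ ∑ _i ∈ T, (Fintype.card V : ℝ) :=
          Finset.sum_le_sum fun i _ => lap_eigenvalue_le_card G i
      _ = (T.card : ℝ) * (Fintype.card V : ℝ) := by
          rw [Finset.sum_const, nsmul_eq_mul]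
      _ = (k:ℝ) * (Fintype.card V : ℝ) := by rw [hT]
  -- second upper bound : s_k ≤ ∑_{v ∈ S} deg v + √(k · 2m)
  have hmcast : (G.edgeFinset.card : ℝ) = (numEdges G : ℝ) := by rw [numEdges_eq]
  have hb2 : sLap G k ≤ (∑ v ∈ S, (G.degree v : ℝ))
      + Real.sqrt ((k:ℝ) * (2 * (numEdges G : ℝ))) := by
    unfold sLap sumKLargest
    refine csSup_le hset_ne ?_
    rintro x ⟨T, hT, rfl⟩
    rw [hLrw]
    have h := sum_lap_eig_le G S T (by rw [hT, hcard]) hSne hdeg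
    rw [hT, hmcast] at h
    exact h
  -- the failed Brouwer inequality
  unfold BC at hfail
  have hfail' : (numEdges G : ℝ) + (((k+1).choose 2 : ℕ) : ℝ) < sLap G k := not_le.mp hfail
  -- m < k n
  have hmn : (numEdges G : ℝ) < (k:ℝ) * (Fintype.card V : ℝ) := by
    have h0 : (0:ℝ) ≤ (((k+1).choose 2 : ℕ) : ℝ) := Nat.cast_nonneg _
    linarith
  -- the counting identity, over ℝ
  have hid := count_identity G S
  rw [hcard] at hid
  have hidR : 2*(∑ v ∈ S, (G.degree v:ℝ)) + 2*(edgesWithin Gᶜ S : ℝ)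
      + 2*(edgesWithin G Sᶜ : ℝ) + (k:ℝ) = 2*(numEdges G : ℝ) + (k:ℝ)*(k:ℝ) := by
    exact_mod_cast hid
  have hch : (((k+1).choose 2 : ℕ) : ℝ) = (k:ℝ)*((k:ℝ)-1)/2 + (k:ℝ) := by
    rw [Nat.cast_choose_two]
    push_cast
    ring
  have hkk : (k:ℝ)*((k:ℝ)-1) = (k:ℝ)*(k:ℝ) - (k:ℝ) := by ring
  set P := (edgesWithin Gᶜ S : ℝ) with hPdef
  set Q := (edgesWithin G Sᶜ : ℝ) with hQdef
  have hP0 : 0 ≤ P := Nat.cast_nonneg _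
  have hQ0 : 0 ≤ Q := Nat.cast_nonneg _
  -- core bound : P + Q + k < √(k · 2m)
  have hmain : P + Q + (k:ℝ) < Real.sqrt ((k:ℝ) * (2 * (numEdges G : ℝ))) := by
    linarith
  -- √(k·2m) ≤ k √(2n)
  have hsq : Real.sqrt ((k:ℝ) * (2 * (numEdges G : ℝ)))
      ≤ (k:ℝ) * Real.sqrt (2 * (Fintype.card V : ℝ)) := by
    have hmul := mul_le_mul_of_nonneg_left hmn.le (by positivity : (0:ℝ) ≤ 2*(k:ℝ))
    have h1 : (k:ℝ) * (2 * (numEdges G : ℝ))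
        ≤ (k:ℝ)^2 * (2 * (Fintype.card V : ℝ)) := by nlinarith
    calc Real.sqrt ((k:ℝ) * (2 * (numEdges G : ℝ)))
        ≤ Real.sqrt ((k:ℝ)^2 * (2 * (Fintype.card V : ℝ))) := Real.sqrt_le_sqrt h1
      _ = (k:ℝ) * Real.sqrt (2 * (Fintype.card V : ℝ)) := by
          rw [Real.sqrt_mul (sq_nonneg _), Real.sqrt_sq hk0]
  -- auxiliary facts about square roots
  have hn1 : (1:ℝ) ≤ (Fintype.card V : ℝ) := by exact_mod_cast le_trans hk1 hk2
  have hsqrt2n : (1:ℝ) ≤ Real.sqrt (2 * (Fintype.card V : ℝ)) := by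
    rw [show (1:ℝ) = Real.sqrt 1 from Real.sqrt_one.symm]
    exact Real.sqrt_le_sqrt (by linarith)
  have h8 : Real.sqrt (8 * (Fintype.card V : ℝ))
      = 2 * Real.sqrt (2 * (Fintype.card V : ℝ)) := by
    rw [show (8:ℝ) * (Fintype.card V : ℝ) = 2^2 * (2 * (Fintype.card V : ℝ)) by ring]
    rw [Real.sqrt_mul (by positivity), Real.sqrt_sq (by norm_num)]
  have hkN : (k:ℝ) ≤ (k:ℝ) * Real.sqrt (2 * (Fintype.card V : ℝ)) := by
    have := mul_le_mul_of_nonneg_left hsqrt2n hk0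
    linarith
  have hgoal8 : (k:ℝ) * Real.sqrt (8 * (Fintype.card V : ℝ))
      = 2 * ((k:ℝ) * Real.sqrt (2 * (Fintype.card V : ℝ))) := by rw [h8]; ring
  have hsplit : IsSplit (splitG G S) := ⟨(↑S : Set V), splitG_clique G S, splitG_indep G S⟩
  have hed : (editDistance G (splitG G S) : ℝ) ≤ Q + P := by
    rw [hQdef, hPdef]
    exact_mod_cast editDistance_splitG_le G S
  have hsp : (splittance G : ℝ) ≤ (editDistance G (splitG G S) : ℝ) := by
    exact_mod_cast splittance_le_editDistance G _ hsplit
  refine ⟨by linarith, by linarith,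
    ⟨splitG G S, splitG_clique G S, splitG_indep G S, by linarith⟩, by linarith⟩

end Brouwer
end
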